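/- Consider the scalar ODE ẋ = -(1/ρ₁)·⌊x⌉^{ρ₂} - ρ₁·⌊x⌉^{2-ρ₂} with ρ₁ > 0 and 0 < ρ₂ < 1, where ⌊x⌉^h = |x|^h·sign(x). The supremum over initial conditions x₀ ∈ ℝ of the settling time T(x₀) equals π/(2(1-ρ₂)), which is strictly greater than π/2 for all admissible parameter values; hence the settling time bound cannot be made arbitrarily small by tuning ρ₁, ρ₂. -/

import Mathlib

open intervalIntegral


lemma settling_key (ρ₁ ρ₂ : ℝ) (hρ₁ : 0 < ρ₁) (hρ₂ : 0 < ρ₂) (hρ₂' : ρ₂ < 1)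
    (t : ℝ) (ht : 0 ≤ t) :
    ∫ z in (0:ℝ)..t, 1 / ((1 / ρ₁) * z ^ ρ₂ + ρ₁ * z ^ (2 - ρ₂)) =
      (1 / (1 - ρ₂)) * Real.arctan (ρ₁ * t ^ (1 - ρ₂)) := by
  set a : ℝ := 1 - ρ₂ with ha_def
  have ha : 0 < a := by simp only [ha_def]; linarith
  set f : ℝ → ℝ := fun z => 1 / ((1 / ρ₁) * z ^ ρ₂ + ρ₁ * z ^ (2 - ρ₂)) with hf_def
  set F : ℝ → ℝ := fun z => (1 / a) * Real.arctan (ρ₁ * z ^ a) with hF_def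
  have hFcont : Continuous F := by
    apply continuous_const.mul
    apply Real.continuous_arctan.comp
    apply continuous_const.mul
    exact continuous_id.rpow_const (fun x => Or.inr ha.le)
  have hderiv : ∀ z ∈ Set.Ioo (0:ℝ) t, HasDerivAt F (f z) z := by
    intro z hz
    have hz0 : 0 < z := hz.1
    have h1 : HasDerivAt (fun z : ℝ => ρ₁ * z ^ a) (ρ₁ * (a * z ^ (a - 1))) z :=
      (Real.hasDerivAt_rpow_const (Or.inl hz0.ne')).const_mul ρ₁
    have h2 := (Real.hasDerivAt_arctan (ρ₁ * z ^ a)).comp z h1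
    have h3 := h2.const_mul (1 / a)
    refine h3.congr_deriv ?_
    symm
    have hza : (0:ℝ) < z ^ a := Real.rpow_pos_of_pos hz0 a
    have hzρ : (0:ℝ) < z ^ ρ₂ := Real.rpow_pos_of_pos hz0 ρ₂
    have e1 : z ^ (2 - ρ₂) = z ^ ρ₂ * (z ^ a) ^ 2 := by
      rw [← Real.rpow_natCast (z ^ a) 2, ← Real.rpow_mul hz0.le, ← Real.rpow_add hz0]
      congr 1
      simp only [ha_def]
      push_cast; ring
    have e4 : z ^ (a - 1) = (z ^ ρ₂)⁻¹ := by
      rw [show a - 1 = -ρ₂ by simp only [ha_def]; ring, Real.rpow_neg hz0.le]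
    have hpos : (0:ℝ) < 1 + (ρ₁ * z ^ a) ^ 2 := by positivity
    simp only [hf_def, e1, e4, Function.comp]
    field_simp
  have hint : IntervalIntegrable f MeasureTheory.volume 0 t := by
    have hg : IntervalIntegrable (fun z : ℝ => ρ₁ * z ^ (-ρ₂)) MeasureTheory.volume 0 t :=
      (intervalIntegral.intervalIntegrable_rpow' (by linarith)).const_mul ρ₁
    apply hg.mono_fun
    · have hc : Continuous fun z : ℝ => (1 / ρ₁) * z ^ ρ₂ + ρ₁ * z ^ (2 - ρ₂) := by
        exact (continuous_const.mul (continuous_id.rpow_const (fun x => Or.inr hρ₂.le))).add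
          (continuous_const.mul (continuous_id.rpow_const (fun x => Or.inr (by linarith))))
      exact (measurable_const.div hc.measurable).aestronglyMeasurable
    · rw [Filter.EventuallyLE, MeasureTheory.ae_restrict_iff' measurableSet_uIoc]
      filter_upwards with z hz
      rw [Set.uIoc_of_le ht] at hz
      have hz0 : 0 < z := hz.1
      have hzρ : (0:ℝ) < z ^ ρ₂ := Real.rpow_pos_of_pos hz0 ρ₂
      have hz2ρ : (0:ℝ) < z ^ (2 - ρ₂) := Real.rpow_pos_of_pos hz0 (2 - ρ₂)
      have hd : (0:ℝ) < (1 / ρ₁) * z ^ ρ₂ + ρ₁ * z ^ (2 - ρ₂) := by positivity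
      have hgpos : (0:ℝ) < ρ₁ * z ^ (-ρ₂) := by positivity
      rw [Real.norm_eq_abs, Real.norm_eq_abs, abs_of_pos (by positivity : (0:ℝ) < f z),
        abs_of_pos hgpos]
      have key : f z ≤ 1 / ((1 / ρ₁) * z ^ ρ₂) := by
        apply one_div_le_one_div_of_le (by positivity)
        nlinarith
      calc f z ≤ 1 / ((1 / ρ₁) * z ^ ρ₂) := key
        _ = ρ₁ * z ^ (-ρ₂) := by
            rw [Real.rpow_neg hz0.le]
            field_simp
  rw [intervalIntegral.integral_eq_sub_of_hasDeriv_right_of_le ht hFcont.continuousOn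
    (fun z hz => (hderiv z hz).hasDerivWithinAt) hint]
  simp [hF_def, Real.zero_rpow ha.ne']

theorem settling_time_sup_fixed_not_predefined (ρ₁ ρ₂ : ℝ)
    (hρ₁ : 0 < ρ₁) (hρ₂ : 0 < ρ₂) (hρ₂' : ρ₂ < 1) (T : ℝ → ℝ)
    (hT : ∀ x₀ : ℝ,
      T x₀ = ∫ z in (0:ℝ)..|x₀|, 1 / ((1 / ρ₁) * z ^ ρ₂ + ρ₁ * z ^ (2 - ρ₂))) :
    (⨆ x₀ : ℝ, T x₀) = Real.pi / (2 * (1 - ρ₂)) ∧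
      Real.pi / 2 < Real.pi / (2 * (1 - ρ₂)) := by
  have ha : 0 < 1 - ρ₂ := by linarith
  have hTeq : ∀ x₀ : ℝ, T x₀ = (1 / (1 - ρ₂)) * Real.arctan (ρ₁ * |x₀| ^ (1 - ρ₂)) := by
    intro x₀
    rw [hT x₀, settling_key ρ₁ ρ₂ hρ₁ hρ₂ hρ₂' |x₀| (abs_nonneg x₀)]
  have hL : Real.pi / (2 * (1 - ρ₂)) = (1 / (1 - ρ₂)) * (Real.pi / 2) := by
    field_simp
  have hub : ∀ x₀ : ℝ, T x₀ ≤ Real.pi / (2 * (1 - ρ₂)) := by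
    intro x₀
    rw [hTeq x₀, hL]
    exact mul_le_mul_of_nonneg_left (Real.arctan_lt_pi_div_two _).le (by positivity)
  have hbdd : BddAbove (Set.range T) := ⟨_, Set.forall_mem_range.mpr hub⟩
  have htend : Filter.Tendsto T Filter.atTop (nhds (Real.pi / (2 * (1 - ρ₂)))) := by
    have h1 : Filter.Tendsto (fun x : ℝ => ρ₁ * |x| ^ (1 - ρ₂)) Filter.atTop Filter.atTop :=
      ((tendsto_rpow_atTop ha).comp Filter.tendsto_abs_atTop_atTop).const_mul_atTop hρ₁
    have h2 : Filter.Tendsto (fun x : ℝ => Real.arctan (ρ₁ * |x| ^ (1 - ρ₂)))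
        Filter.atTop (nhds (Real.pi / 2)) :=
      (Real.tendsto_arctan_atTop.mono_right nhdsWithin_le_nhds).comp h1
    have h3 := h2.const_mul (1 / (1 - ρ₂))
    rw [hL]
    refine h3.congr fun x => (hTeq x).symm
  constructor
  · refine le_antisymm (ciSup_le hub) ?_
    exact le_of_tendsto htend (Filter.Eventually.of_forall fun x => le_ciSup hbdd x)
  · rw [div_lt_div_iff₀ (by norm_num) (by positivity)]
    nlinarith [Real.pi_pos]
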